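/- Let (E,ρ) and (I,d) be complete separable metric spaces. For each n ∈ ℕ let ν_n be a finite Borel measure on E and κ_n : E → I Borel measurable, and set μ_n := pushforward of ν_n under x ↦ (x,κ_n(x)). Assume μ_n → μ weakly on E×I for a finite Borel measure μ. Suppose there are Borel sets Z_{n,δ} ⊆ E (n ∈ ℕ, δ > 0) such that the functions x ↦ 1 ∧ diam(κ_n(B_δ(x) ∩ Z_{n,δ})) are Borel measurable and lim_{δ↓0} liminf_{n→∞} [ ν_n(E ∖ Z_{n,δ}) + ∫_{Z_{n,δ}} (1 ∧ diam(κ_n(B_δ(x) ∩ Z_{n,δ}))) ν_n(dx) ] = 0, where B_δ(x) := {y ∈ E : ρ(x,y) < δ} and diam denotes the diameter of a subset of (I,d). Then μ admits a mark function. -/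

import Mathlib

open MeasureTheory Filter Topology ENNReal

/-- `κ` is a mark function for `μ`: it is measurable and `μ(dx,du) = ν(dx) δ_{κ(x)}(du)`,
i.e. `μ` is the pushforward of its first marginal under `x ↦ (x, κ x)`. -/
def IsMarkFunction {X I : Type*} [MeasurableSpace X] [MeasurableSpace I]
    (μ : Measure (X × I)) (κ : X → I) : Prop :=
  Measurable κ ∧ μ = μ.fst.map (fun x => (x, κ x))

/-- Weak convergence of finite Borel measures: convergence of integrals of all bounded
continuous functions. -/
def WeakConv {E : Type*} [TopologicalSpace E] [MeasurableSpace E]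
    (μ : ℕ → Measure E) (ν : Measure E) : Prop :=
  ∀ f : BoundedContinuousFunction E ℝ,
    Tendsto (fun n => ∫ x, f x ∂(μ n)) atTop (𝓝 (∫ x, f x ∂ν))

lemma weakConv_le_liminf_open {X : Type*} [MetricSpace X]
    [MeasurableSpace X] [BorelSpace X]
    {μs : ℕ → Measure X} [∀ n, IsFiniteMeasure (μs n)] {μ : Measure X} [IsFiniteMeasure μ]
    (h : WeakConv μs μ) {U : Set X} (hU : IsOpen U) :
    μ U ≤ atTop.liminf fun n => μs n U := by
  have hFM := (FiniteMeasure.tendsto_iff_forall_integral_tendsto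
      (μs := fun n => (⟨μs n, inferInstance⟩ : FiniteMeasure X))
      (μ := (⟨μ, inferInstance⟩ : FiniteMeasure X)) (F := atTop)).mpr (fun f => h f)
  have hclosed : atTop.limsup (fun n => μs n Uᶜ) ≤ μ Uᶜ :=
    FiniteMeasure.limsup_measure_closed_le_of_tendsto hFM (isClosed_compl_iff.mpr hU)
  have hmassR : Tendsto (fun n => (μs n Set.univ).toReal) atTop (𝓝 (μ Set.univ).toReal) := by
    have h1 := h (BoundedContinuousFunction.const X (1 : ℝ))
    simpa [integral_const, measureReal_def] using h1
  have hmass : Tendsto (fun n => μs n Set.univ) atTop (𝓝 (μ Set.univ)) := by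
    have h2 := ENNReal.tendsto_ofReal hmassR
    rw [ENNReal.ofReal_toReal (measure_ne_top μ _)] at h2
    refine h2.congr fun n => ?_
    rw [ENNReal.ofReal_toReal (measure_ne_top (μs n) _)]
  refine ENNReal.le_of_forall_pos_le_add fun ε hε _ => ?_
  have hε2 : (0 : ℝ≥0∞) < (ε : ℝ≥0∞) / 2 := by
    simp [ENNReal.div_pos_iff, hε.ne']
  have h2 : ∀ᶠ n in atTop, μs n Uᶜ < μ Uᶜ + (ε : ℝ≥0∞) / 2 := by
    refine eventually_lt_of_limsup_lt (lt_of_le_of_lt hclosed ?_)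
    exact ENNReal.lt_add_right (measure_ne_top μ _) hε2.ne'
  have h1 : ∀ᶠ n in atTop, μ Set.univ ≤ μs n Set.univ + (ε : ℝ≥0∞) / 2 := by
    by_cases hle : μ Set.univ ≤ (ε : ℝ≥0∞) / 2
    · exact Eventually.of_forall fun n => hle.trans le_add_self
    · push_neg at hle
      have hsub : μ Set.univ - (ε : ℝ≥0∞) / 2 < μ Set.univ :=
        ENNReal.sub_lt_self (measure_ne_top μ _) (hε2.trans hle).ne' hε2.ne'
      filter_upwards [hmass.eventually (eventually_gt_nhds hsub)] with n hn
      have := tsub_add_cancel_of_le hle.le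
      calc μ Set.univ = μ Set.univ - (ε : ℝ≥0∞) / 2 + (ε : ℝ≥0∞) / 2 := this.symm
        _ ≤ μs n Set.univ + (ε : ℝ≥0∞) / 2 := by gcongr
  have key : ∀ᶠ n in atTop, μ U - (ε : ℝ≥0∞) ≤ μs n U := by
    filter_upwards [h1, h2] with n hn1 hn2
    rw [tsub_le_iff_right]
    have e1 : μ U + μ Uᶜ = μ Set.univ := measure_add_measure_compl hU.measurableSet
    have e2 : μs n Set.univ ≤ μs n U + μs n Uᶜ := by
      rw [← Set.union_compl_self U]
      exact measure_union_le _ _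
    have : μ U + μ Uᶜ ≤ (μs n U + (ε : ℝ≥0∞)) + μ Uᶜ := by
      calc μ U + μ Uᶜ = μ Set.univ := e1
        _ ≤ μs n Set.univ + (ε : ℝ≥0∞) / 2 := hn1
        _ ≤ (μs n U + μs n Uᶜ) + (ε : ℝ≥0∞) / 2 := by gcongr
        _ ≤ (μs n U + (μ Uᶜ + (ε : ℝ≥0∞) / 2)) + (ε : ℝ≥0∞) / 2 := by gcongr
        _ = (μs n U + (ε : ℝ≥0∞)) + μ Uᶜ := by
            have e3 : (μ Uᶜ + (ε : ℝ≥0∞) / 2) + (ε : ℝ≥0∞) / 2 = (ε : ℝ≥0∞) + μ Uᶜ := by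
              rw [add_assoc, ENNReal.add_halves, add_comm]
            rw [add_assoc, e3, ← add_assoc]
    exact (ENNReal.add_le_add_iff_right (measure_ne_top μ _)).mp this
  have := le_liminf_of_le (by isBoundedDefault) key
  rw [tsub_le_iff_right] at this
  exact this

lemma eq_dirac_of_pairs {I : Type*} [MetricSpace I] [MeasurableSpace I] [BorelSpace I]
    (θ : Measure I) [IsProbabilityMeasure θ] (v : ℕ → I) (hv : DenseRange v)
    (h : ∀ (i j : ℕ) (q q' : ℚ), 0 < q → 0 < q' → (q : ℝ) + (q' : ℝ) < dist (v i) (v j) →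
      θ (Metric.ball (v i) (q : ℝ)) = 0 ∨ θ (Metric.ball (v j) (q' : ℝ)) = 0) :
    ∃ p : I, θ = Measure.dirac p := by
  classical
  set T : Set (ℕ × ℚ) := {t | 0 < t.2 ∧ θ (Metric.ball (v t.1) (t.2 : ℝ)) = 0} with hT
  have hTnull : θ (⋃ t ∈ T, Metric.ball (v t.1) ((t.2 : ℚ) : ℝ)) = 0 := by
    refine (measure_biUnion_null_iff (Set.to_countable T)).mpr fun t ht => ht.2
  -- any null ball around any point is inside a null basis ball containing the point
  have keyA : ∀ (u : I) (r : ℝ), 0 < r → θ (Metric.ball u r) = 0 →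
      ∃ t ∈ T, u ∈ Metric.ball (v t.1) ((t.2 : ℚ) : ℝ) := by
    intro u r hr hnull
    obtain ⟨i, hi⟩ := hv.exists_dist_lt u (by linarith : (0:ℝ) < r/3)
    obtain ⟨q, hq1, hq2⟩ := exists_rat_btwn (by linarith : (r/3 : ℝ) < r/2)
    have hqpos : 0 < q := by
      have : (0:ℝ) < q := lt_trans (by linarith) hq1
      exact_mod_cast this
    have hsub : Metric.ball (v i) (q : ℝ) ⊆ Metric.ball u r := by
      intro z hz
      rw [Metric.mem_ball] at hz ⊢
      have := dist_triangle z (v i) u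
      rw [dist_comm u (v i)] at hi
      have h5 : dist (v i) u < r/3 := hi
      nlinarith [hz, h5, this, hq2]
    refine ⟨(i, q), ⟨hqpos, measure_mono_null hsub hnull⟩, ?_⟩
    rw [Metric.mem_ball, dist_comm]
    calc dist (v i) u < r/3 := by rw [dist_comm u (v i)] at hi; exact hi
      _ < q := hq1
  -- there exists a point all whose balls are non-null
  have hP : ∃ u : I, ∀ r : ℝ, 0 < r → θ (Metric.ball u r) ≠ 0 := by
    by_contra hno
    push_neg at hno
    have hcover : (Set.univ : Set I) ⊆ ⋃ t ∈ T, Metric.ball (v t.1) ((t.2 : ℚ) : ℝ) := by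
      intro u _
      obtain ⟨r, hr, hnull⟩ := hno u
      obtain ⟨t, ht, hmem⟩ := keyA u r hr hnull
      exact Set.mem_biUnion ht hmem
    have : θ Set.univ = 0 := measure_mono_null hcover hTnull
    simp [measure_univ] at this
  obtain ⟨u, hu⟩ := hP
  -- uniqueness of such a point
  have huniq : ∀ w : I, (∀ r : ℝ, 0 < r → θ (Metric.ball w r) ≠ 0) → w = u := by
    intro w hw
    by_contra hne
    have hD : 0 < dist u w := dist_pos.mpr (Ne.symm hne)
    set D := dist u w with hDdef
    obtain ⟨i, hi⟩ := hv.exists_dist_lt u (by linarith : (0:ℝ) < D/8)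
    obtain ⟨j, hj⟩ := hv.exists_dist_lt w (by linarith : (0:ℝ) < D/8)
    obtain ⟨q, hq1, hq2⟩ := exists_rat_btwn (by linarith : (D/8 : ℝ) < D/7)
    have hqpos : 0 < q := by
      have : (0:ℝ) < q := lt_trans (by linarith) hq1
      exact_mod_cast this
    have hsep : (q : ℝ) + (q : ℝ) < dist (v i) (v j) := by
      have htri : dist u w ≤ dist u (v i) + dist (v i) (v j) + dist (v j) w := by
        calc dist u w ≤ dist u (v j) + dist (v j) w := dist_triangle _ _ _
          _ ≤ (dist u (v i) + dist (v i) (v j)) + dist (v j) w := by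
              gcongr; exact dist_triangle _ _ _
      rw [dist_comm w (v j)] at hj
      nlinarith [hi, hj, htri, hq2]
    rcases h i j q q hqpos hqpos hsep with hnull | hnull
    · refine hu ((q : ℝ) - dist u (v i)) (by linarith [hi]) ?_
      refine measure_mono_null ?_ hnull
      intro z hz
      rw [Metric.mem_ball] at hz ⊢
      have := dist_triangle z u (v i)
      linarith
    · refine hw ((q : ℝ) - dist w (v j)) (by linarith [hj]) ?_
      refine measure_mono_null ?_ hnull
      intro z hz
      rw [Metric.mem_ball] at hz ⊢
      have := dist_triangle z w (v j)
      linarith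
  -- θ is concentrated at u
  have hcompl : θ ({u}ᶜ) = 0 := by
    have hsub : ({u}ᶜ : Set I) ⊆ ⋃ t ∈ T, Metric.ball (v t.1) ((t.2 : ℚ) : ℝ) := by
      intro w hw
      have hwne : w ≠ u := hw
      have : ∃ r : ℝ, 0 < r ∧ θ (Metric.ball w r) = 0 := by
        by_contra hcon
        push_neg at hcon
        exact hwne (huniq w fun r hr => hcon r hr)
      obtain ⟨r, hr, hnull⟩ := this
      obtain ⟨t, ht, hmem⟩ := keyA w r hr hnull
      exact Set.mem_biUnion ht hmem
    exact measure_mono_null hsub hTnull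
  refine ⟨u, Measure.ext fun s hs => ?_⟩
  rw [Measure.dirac_apply' u hs]
  by_cases hus : u ∈ s
  · have h1 : θ sᶜ = 0 := measure_mono_null (fun z hz => by
      simp only [Set.mem_compl_iff, Set.mem_singleton_iff] at hz ⊢
      exact fun he => hz (he ▸ hus)) hcompl
    have h2 : θ s + θ sᶜ = θ Set.univ := measure_add_measure_compl hs
    rw [h1, add_zero, measure_univ] at h2
    rw [h2, Set.indicator_of_mem hus]
    rfl
  · have h1 : θ s = 0 := measure_mono_null (fun z hz => by
      simp only [Set.mem_compl_iff, Set.mem_singleton_iff]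
      exact fun he => hus (he ▸ hz)) hcompl
    rw [h1, Set.indicator_of_notMem hus]

lemma exists_measurable_dirac_selection {E I : Type*} [MeasurableSpace E] [MetricSpace I]
    [Nonempty I] [MeasurableSpace I] [BorelSpace I] [SecondCountableTopology I]
    (η : ProbabilityTheory.Kernel E I) [ProbabilityTheory.IsMarkovKernel η] (νl : Measure E)
    (hae : ∀ᵐ x ∂νl, ∃ p : I, η x = Measure.dirac p) :
    ∃ κ₀ : E → I, Measurable κ₀ ∧ ∀ᵐ x ∂νl, η x = Measure.dirac (κ₀ x) := by
  classical
  set v : ℕ → I := TopologicalSpace.denseSeq I with hv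
  have hvd : DenseRange v := TopologicalSpace.denseRange_denseSeq I
  set p : ℕ → ℕ → E → Prop := fun k i x =>
    (1/2 : ℝ≥0∞) < η x (Metric.ball (v i) ((1/2) ^ k)) ∨
      (∀ j : ℕ, ¬ ((1/2 : ℝ≥0∞) < η x (Metric.ball (v j) ((1/2) ^ k)))) with hp
  have hex : ∀ k x, ∃ i, p k i x := by
    intro k x
    by_cases hc : ∃ j, (1/2 : ℝ≥0∞) < η x (Metric.ball (v j) ((1/2) ^ k))
    · obtain ⟨j, hj⟩ := hc
      exact ⟨j, Or.inl hj⟩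
    · push_neg at hc
      exact ⟨0, Or.inr fun j => not_lt.mpr (hc j)⟩
  have hpm : ∀ k i, MeasurableSet {x | p k i x} := by
    intro k i
    have hb : ∀ j : ℕ, MeasurableSet {x | (1/2 : ℝ≥0∞) < η x (Metric.ball (v j) ((1/2) ^ k))} :=
      fun j => measurableSet_lt measurable_const
        (η.measurable_coe Metric.isOpen_ball.measurableSet)
    have heq : {x | p k i x} =
        {x | (1/2 : ℝ≥0∞) < η x (Metric.ball (v i) ((1/2) ^ k))} ∪
          (⋂ j, {x | (1/2 : ℝ≥0∞) < η x (Metric.ball (v j) ((1/2) ^ k))}ᶜ) := by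
      ext x
      simp only [hp, Set.mem_setOf_eq, Set.mem_union, Set.mem_iInter, Set.mem_compl_iff]
    rw [heq]
    exact (hb i).union (MeasurableSet.iInter fun j => (hb j).compl)
  set g : ℕ → E → I := fun k x => v (Nat.find (hex k x)) with hg
  have hgm : ∀ k, Measurable (g k) :=
    fun k => Measurable.find (fun i => measurable_const (a := v i)) (hpm k) (fun x => hex k x)
  have hpow : Tendsto (fun k : ℕ => ((1:ℝ)/2) ^ k) atTop (𝓝 0) := by
    apply _root_.tendsto_pow_atTop_nhds_zero_of_lt_one <;> norm_num
  have hconv : ∀ (x : E) (q : I), η x = Measure.dirac q →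
      Tendsto (fun k => g k x) atTop (𝓝 q) := by
    intro x q hq
    have hdist : ∀ k, dist (g k x) q < (1/2) ^ k := by
      intro k
      have hex2 : ∃ j, (1/2 : ℝ≥0∞) < η x (Metric.ball (v j) ((1/2) ^ k)) := by
        obtain ⟨j, hj⟩ := hvd.exists_dist_lt q (by positivity : (0:ℝ) < (1/2) ^ k)
        refine ⟨j, ?_⟩
        rw [hq, Measure.dirac_apply' _ Metric.isOpen_ball.measurableSet,
          Set.indicator_of_mem]
        · simp only [Pi.one_apply]
          norm_num
        · exact Metric.mem_ball.mpr hj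
      have hfind := Nat.find_spec (hex k x)
      rcases hfind with hfind | hfind
      · set i0 := Nat.find (hex k x) with hi0
        rw [hq, Measure.dirac_apply' _ Metric.isOpen_ball.measurableSet] at hfind
        by_cases hmem : q ∈ Metric.ball (v i0) ((1/2) ^ k)
        · have h6 := Metric.mem_ball.mp hmem
          calc dist (g k x) q = dist q (g k x) := dist_comm _ _
            _ < (1/2) ^ k := h6
        · rw [Set.indicator_of_notMem hmem] at hfind
          simp at hfind
      · exact absurd hex2 (by push_neg; exact fun j => not_lt.mp (hfind j))
    rw [tendsto_iff_dist_tendsto_zero]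
    exact squeeze_zero (fun k => dist_nonneg) (fun k => (hdist k).le) hpow
  have htendsto : ∀ᵐ x ∂νl, ∃ l : I, Tendsto (fun k => g k x) atTop (𝓝 l) := by
    filter_upwards [hae] with x ⟨q, hq⟩
    exact ⟨q, hconv x q hq⟩
  obtain ⟨κ₀, hκ₀m, hκ₀t⟩ := measurable_limit_of_tendsto_metrizable_ae
    (fun k => (hgm k).aemeasurable) htendsto
  refine ⟨κ₀, hκ₀m, ?_⟩
  filter_upwards [hae, hκ₀t] with x ⟨q, hq⟩ hxt
  have : q = κ₀ x := tendsto_nhds_unique (hconv x q hq) hxt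
  rw [hq, this]

open scoped ProbabilityTheory in
lemma compProd_dirac_eq_map {E I : Type*} [MeasurableSpace E] [MeasurableSpace I]
    (νl : Measure E) [SFinite νl] (η : ProbabilityTheory.Kernel E I)
    [ProbabilityTheory.IsSFiniteKernel η] (κ₀ : E → I) (hκ₀ : Measurable κ₀)
    (hae : ∀ᵐ x ∂νl, η x = Measure.dirac (κ₀ x)) :
    νl ⊗ₘ η = νl.map (fun x => (x, κ₀ x)) := by
  ext s hs
  rw [Measure.compProd_apply hs,
    Measure.map_apply (show Measurable fun x : E => (x, κ₀ x) from measurable_id.prodMk hκ₀) hs]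
  calc ∫⁻ x, η x (Prod.mk x ⁻¹' s) ∂νl
      = ∫⁻ x, Set.indicator ((fun x => (x, κ₀ x)) ⁻¹' s) (fun _ => 1) x ∂νl := by
        refine lintegral_congr_ae (hae.mono fun x hx => ?_)
        show η x (Prod.mk x ⁻¹' s) = _
        rw [hx, Measure.dirac_apply' _ (measurable_prodMk_left hs)]
        by_cases hmem : (x, κ₀ x) ∈ s <;>
          simp [Set.indicator_apply, Set.mem_preimage, hmem]
    _ = νl ((fun x => (x, κ₀ x)) ⁻¹' s) := by
        rw [lintegral_indicator ((show Measurable fun x : E => (x, κ₀ x) from measurable_id.prodMk hκ₀) hs)]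
        simp

open scoped ProbabilityTheory in
lemma core_null {E I : Type*}
    [MetricSpace E] [CompleteSpace E] [SecondCountableTopology E]
    [MeasurableSpace E] [BorelSpace E] [Nonempty E]
    [MetricSpace I] [CompleteSpace I] [SecondCountableTopology I]
    [MeasurableSpace I] [BorelSpace I] [Nonempty I]
    (ν : ℕ → Measure E) [∀ n, IsFiniteMeasure (ν n)]
    (κ : ℕ → E → I) (hκ : ∀ n, Measurable (κ n))
    (μ : Measure (E × I)) [IsFiniteMeasure μ]
    (hopenP : ∀ U : Set (E × I), IsOpen U →
      μ U ≤ atTop.liminf fun n => ((ν n).map fun x => (x, κ n x)) U)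
    (hopenE : ∀ U : Set E, IsOpen U → μ.fst U ≤ atTop.liminf fun n => ν n U)
    (Z : ℕ → ℝ → Set E) (hZ : ∀ n δ, MeasurableSet (Z n δ))
    (hdiammeas : ∀ n, ∀ δ : ℝ, Measurable (fun x : E =>
      min 1 (EMetric.diam (κ n '' (Metric.ball x δ ∩ Z n δ)))))
    (hlim : Tendsto (fun δ : ℝ => Filter.liminf (fun n =>
        (ν n) (Z n δ)ᶜ +
          ∫⁻ x in Z n δ, min 1 (EMetric.diam (κ n '' (Metric.ball x δ ∩ Z n δ))) ∂(ν n))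
        atTop)
      (𝓝[>] (0 : ℝ)) (𝓝 0))
    {w w' : I} {q q' : ℝ} (hq : 0 < q) (hq' : 0 < q') (hsep : q + q' < dist w w')
    {τ : ℝ≥0∞} (hτ0 : 0 < τ) (hτ1 : τ ≤ 1) :
    μ.fst {x | τ ≤ μ.condKernel x (Metric.ball w q) ∧ τ ≤ μ.condKernel x (Metric.ball w' q')}
      = 0 := by
  classical
  set νl := μ.fst with hνl
  set η := μ.condKernel with hη
  set X : Set E := {x | τ ≤ η x (Metric.ball w q) ∧ τ ≤ η x (Metric.ball w' q')} with hX
  have hXmeas : MeasurableSet X := by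
    have h1 : Measurable fun x => η x (Metric.ball w q) :=
      η.measurable_coe Metric.isOpen_ball.measurableSet
    have h2 : Measurable fun x => η x (Metric.ball w' q') :=
      η.measurable_coe Metric.isOpen_ball.measurableSet
    exact (h1 measurableSet_Ici).inter (h2 measurableSet_Ici)
  by_contra hc0
  set c := νl X with hc
  have hcfin : c ≠ ∞ := (measure_lt_top νl X).ne
  set e' : ℝ := dist w w' - q - q' with he'
  have he'pos : 0 < e' := by rw [he']; linarith
  set eE : ℝ≥0∞ := ENNReal.ofReal e' with heE
  have heEpos : 0 < eE := ENNReal.ofReal_pos.mpr he'pos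
  set β : ℝ≥0∞ := min (min 1 eE) τ with hβ
  have hβpos : 0 < β := lt_min (lt_min one_pos heEpos) hτ0
  have hβ1 : β ≤ 1 := le_trans (min_le_left _ _) (min_le_left _ _)
  set ε₀ : ℝ≥0∞ := β * (c / 2) / 2 with hε₀
  have hε₀pos : 0 < ε₀ := by
    rw [hε₀]
    refine ENNReal.div_pos ?_ (by norm_num)
    refine mul_ne_zero hβpos.ne' ?_
    simp only [ne_eq, ENNReal.div_eq_zero_iff]
    push_neg
    exact ⟨hc0, by norm_num⟩
  -- the key step: a uniform-in-δ lower bound on the liminf expression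
  have key : ∀ δ : ℝ, 0 < δ → ε₀ ≤ atTop.liminf (fun n =>
      (ν n) (Z n δ)ᶜ +
        ∫⁻ x in Z n δ, min 1 (EMetric.diam (κ n '' (Metric.ball x δ ∩ Z n δ))) ∂(ν n)) := by
    intro δ hδ
    set x_ : ℕ → E := TopologicalSpace.denseSeq E with hx_
    have hx_d : DenseRange x_ := TopologicalSpace.denseRange_denseSeq E
    have hrex : ∀ i : ℕ, ∃ r, r ∈ Set.Ioo (δ/4) (δ/2) ∧
        νl (frontier (Metric.ball (x_ i) r)) = 0 := by
      intro i
      obtain ⟨r, hr1, hr2⟩ := exists_null_frontier_thickening νl {x_ i}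
        (by linarith : δ/4 < δ/2)
      exact ⟨r, hr1, by rwa [Metric.thickening_singleton] at hr2⟩
    choose r hr1 hr2 using hrex
    set B : ℕ → Set E := fun i => Metric.ball (x_ i) (r i) with hB
    set P : ℕ → Set E := fun i => B i \ ⋃ j ∈ Finset.range i, B j with hP
    set U : ℕ → Set E := fun i => interior (P i) with hU
    have hPB : ∀ i, P i ⊆ B i := fun i => Set.diff_subset
    have hPmeas : ∀ i, MeasurableSet (P i) := fun i =>
      measurableSet_ball.diff (Finset.measurableSet_biUnion _ fun j _ => measurableSet_ball)
    have hUmeas : ∀ i, MeasurableSet (U i) := fun i => isOpen_interior.measurableSet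
    have hUP : ∀ i, U i ⊆ P i := fun i => interior_subset
    have hPdisj : Pairwise (Function.onFun Disjoint P) := by
      intro i j hij
      rcases hij.lt_or_gt with hlt | hlt
      · refine Set.disjoint_left.mpr fun z hzi hzj => ?_
        exact hzj.2 (Set.mem_biUnion (Finset.mem_range.mpr hlt) (hPB i hzi))
      · refine Set.disjoint_left.mpr fun z hzi hzj => ?_
        exact hzi.2 (Set.mem_biUnion (Finset.mem_range.mpr hlt) (hPB j hzj))
    have hPcov : (⋃ i, P i) = Set.univ := by
      rw [Set.eq_univ_iff_forall]
      intro y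
      have hexB : ∃ i, y ∈ B i := by
        obtain ⟨i, hi⟩ := hx_d.exists_dist_lt y (by linarith : (0:ℝ) < δ/4)
        exact ⟨i, Metric.mem_ball.mpr (lt_trans hi (hr1 i).1)⟩
      refine Set.mem_iUnion.mpr ⟨Nat.find hexB, Nat.find_spec hexB, fun hmem => ?_⟩
      obtain ⟨j, hj, hyB⟩ := Set.mem_iUnion₂.mp hmem
      exact Nat.find_min hexB (Finset.mem_range.mp hj) hyB
    have hPU0 : ∀ i, νl (P i \ U i) = 0 := by
      intro i
      have hsub : P i \ U i ⊆ ⋃ j, frontier (B j) := by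
        intro y hy
        by_contra hnot
        have hnot' : ∀ j, y ∉ frontier (B j) := by
          intro j hmem
          exact hnot (Set.mem_iUnion.mpr ⟨j, hmem⟩)
        have hyP := hy.1
        have hyB : y ∈ B i := hPB i hyP
        have hVopen : IsOpen (B i ∩ ⋂ j ∈ Finset.range i, (closure (B j))ᶜ) :=
          Metric.isOpen_ball.inter (isOpen_biInter_finset fun j _ =>
            isClosed_closure.isOpen_compl)
        have hyV : y ∈ B i ∩ ⋂ j ∈ Finset.range i, (closure (B j))ᶜ := by
          refine ⟨hyB, ?_⟩
          rw [Set.mem_iInter₂]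
          intro j hj
          have hynotB : y ∉ B j := fun hmem => hyP.2 (Set.mem_biUnion hj hmem)
          intro hcl
          have : y ∈ frontier (B j) := by
            rw [Metric.isOpen_ball.frontier_eq]
            exact ⟨hcl, hynotB⟩
          exact hnot' j this
        have hyU : y ∈ U i := by
          refine mem_interior.mpr ⟨_, ?_, hVopen, hyV⟩
          intro z hz
          refine ⟨hz.1, fun hmem => ?_⟩
          obtain ⟨j, hj, hzB⟩ := Set.mem_iUnion₂.mp hmem
          exact (Set.mem_iInter₂.mp hz.2 j hj) (subset_closure hzB)
        exact hy.2 hyU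
      exact measure_mono_null hsub (measure_iUnion_null fun j => hr2 j)
    set cJ : ℕ → ℝ≥0∞ := fun i => νl (X ∩ U i) with hcJ
    have hsum : ∑' i, cJ i = c := by
      have h1 : νl X = ∑' i, νl (X ∩ P i) := by
        rw [← measure_iUnion ?_ (fun i => hXmeas.inter (hPmeas i))]
        · rw [← Set.inter_iUnion, hPcov, Set.inter_univ]
        · intro i j hij
          exact (hPdisj hij).mono Set.inter_subset_right Set.inter_subset_right
      have h2 : ∀ i, νl (X ∩ P i) = cJ i := by
        intro i
        refine le_antisymm ?_ (measure_mono (Set.inter_subset_inter_right _ (hUP i)))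
        calc νl (X ∩ P i) ≤ νl ((X ∩ U i) ∪ (P i \ U i)) := by
              refine measure_mono fun z hz => ?_
              by_cases hzU : z ∈ U i
              · exact Or.inl ⟨hz.1, hzU⟩
              · exact Or.inr ⟨hz.2, hzU⟩
          _ ≤ νl (X ∩ U i) + νl (P i \ U i) := measure_union_le _ _
          _ = cJ i := by rw [hPU0 i, add_zero]
      rw [hc, h1]
      exact tsum_congr fun i => (h2 i).symm
    obtain ⟨J, hJ⟩ : ∃ J : Finset ℕ, c/2 < ∑ i ∈ J, cJ i := by
      have h3 : c/2 < ⨆ s : Finset ℕ, ∑ i ∈ s, cJ i := by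
        rw [← ENNReal.tsum_eq_iSup_sum, hsum]
        exact ENNReal.half_lt_self hc0 hcfin
      exact lt_iSup_iff.mp h3
    have hdis : νl ⊗ₘ η = μ := μ.disintegrate μ.condKernel
    have hai : ∀ i, τ * cJ i ≤ μ ((U i) ×ˢ Metric.ball w q) := by
      intro i
      rw [← hdis, Measure.compProd_apply_prod (hUmeas i) Metric.isOpen_ball.measurableSet]
      calc τ * cJ i = ∫⁻ _ in X ∩ U i, τ ∂νl := by rw [setLIntegral_const]
        _ ≤ ∫⁻ x in X ∩ U i, η x (Metric.ball w q) ∂νl :=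
            setLIntegral_mono' (hXmeas.inter (hUmeas i)) fun x hx => hx.1.1
        _ ≤ ∫⁻ x in U i, η x (Metric.ball w q) ∂νl :=
            lintegral_mono_set Set.inter_subset_right
    have hbi : ∀ i, τ * cJ i ≤ μ ((U i) ×ˢ Metric.ball w' q') := by
      intro i
      rw [← hdis, Measure.compProd_apply_prod (hUmeas i) Metric.isOpen_ball.measurableSet]
      calc τ * cJ i = ∫⁻ _ in X ∩ U i, τ ∂νl := by rw [setLIntegral_const]
        _ ≤ ∫⁻ x in X ∩ U i, η x (Metric.ball w' q') ∂νl :=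
            setLIntegral_mono' (hXmeas.inter (hUmeas i)) fun x hx => hx.1.2
        _ ≤ ∫⁻ x in U i, η x (Metric.ball w' q') ∂νl :=
            lintegral_mono_set Set.inter_subset_right
    set μn : ℕ → Measure (E × I) := fun n => (ν n).map (fun x => (x, κ n x)) with hμn
    have hev : ∀ᶠ n in atTop, ∀ i ∈ J,
        τ * cJ i / 2 ≤ μn n ((U i) ×ˢ Metric.ball w q) ∧
        τ * cJ i / 2 ≤ μn n ((U i) ×ˢ Metric.ball w' q') ∧
        cJ i / 2 ≤ ν n (U i) := by
      rw [eventually_all_finset]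
      intro i _
      have hcJfin : cJ i ≠ ∞ := (measure_lt_top νl _).ne
      have hfin1 : τ * cJ i ≠ ∞ :=
        ENNReal.mul_ne_top (hτ1.trans_lt ENNReal.one_lt_top).ne hcJfin
      have e1 : ∀ᶠ n in atTop, τ * cJ i / 2 ≤ μn n ((U i) ×ˢ Metric.ball w q) := by
        rcases eq_or_ne (cJ i) 0 with h0 | h0
        · exact Eventually.of_forall fun n => by simp [h0]
        · have hlt : τ * cJ i / 2 < τ * cJ i :=
            ENNReal.half_lt_self (mul_ne_zero hτ0.ne' h0) hfin1
          have h4 : τ * cJ i / 2 < atTop.liminf fun n => μn n ((U i) ×ˢ Metric.ball w q) :=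
            lt_of_lt_of_le hlt ((hai i).trans
              (hopenP _ (isOpen_interior.prod Metric.isOpen_ball)))
          exact (eventually_lt_of_lt_liminf h4).mono fun n hn => hn.le
      have e2 : ∀ᶠ n in atTop, τ * cJ i / 2 ≤ μn n ((U i) ×ˢ Metric.ball w' q') := by
        rcases eq_or_ne (cJ i) 0 with h0 | h0
        · exact Eventually.of_forall fun n => by simp [h0]
        · have hlt : τ * cJ i / 2 < τ * cJ i :=
            ENNReal.half_lt_self (mul_ne_zero hτ0.ne' h0) hfin1
          have h4 : τ * cJ i / 2 < atTop.liminf fun n => μn n ((U i) ×ˢ Metric.ball w' q') :=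
            lt_of_lt_of_le hlt ((hbi i).trans
              (hopenP _ (isOpen_interior.prod Metric.isOpen_ball)))
          exact (eventually_lt_of_lt_liminf h4).mono fun n hn => hn.le
      have e3 : ∀ᶠ n in atTop, cJ i / 2 ≤ ν n (U i) := by
        rcases eq_or_ne (cJ i) 0 with h0 | h0
        · exact Eventually.of_forall fun n => by simp [h0]
        · have hlt : cJ i / 2 < cJ i := ENNReal.half_lt_self h0 hcJfin
          have h4 : cJ i / 2 < atTop.liminf fun n => ν n (U i) :=
            lt_of_lt_of_le hlt ((measure_mono Set.inter_subset_right).trans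
              (hopenE _ isOpen_interior))
          exact (eventually_lt_of_lt_liminf h4).mono fun n hn => hn.le
      exact e1.and (e2.and e3)
    have hmain : ∀ᶠ n in atTop, ε₀ ≤
        (ν n) (Z n δ)ᶜ +
          ∫⁻ x in Z n δ, min 1 (EMetric.diam (κ n '' (Metric.ball x δ ∩ Z n δ))) ∂(ν n) := by
      filter_upwards [hev] with n hn
      set Zn := Z n δ with hZn
      set G : E → ℝ≥0∞ := fun y => min 1 (EMetric.diam (κ n '' (Metric.ball y δ ∩ Zn))) with hG
      have hone : ∀ i ∈ J, β * (cJ i / 2) ≤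
          (ν n) (Znᶜ ∩ U i) + ∫⁻ y in Zn ∩ U i, G y ∂(ν n) := by
        intro i hi
        obtain ⟨h1, h2, h3⟩ := hn i hi
        by_cases hgood : (∃ z, z ∈ U i ∩ Zn ∧ κ n z ∈ Metric.ball w q) ∧
            (∃ z', z' ∈ U i ∩ Zn ∧ κ n z' ∈ Metric.ball w' q')
        · obtain ⟨⟨z, hzU, hzB⟩, ⟨z', hzU', hzB'⟩⟩ := hgood
          have hdistyz : ∀ y ∈ U i, ∀ a ∈ U i, dist y a < δ := by
            intro y hy a ha
            have hyB : y ∈ B i := hPB i (hUP i hy)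
            have haB : a ∈ B i := hPB i (hUP i ha)
            rw [hB, Metric.mem_ball] at hyB haB
            calc dist y a ≤ dist y (x_ i) + dist a (x_ i) := dist_triangle_right _ _ _
              _ < r i + r i := add_lt_add hyB haB
              _ < δ := by have h5 := (hr1 i).2; linarith
          have hpoint : ∀ y ∈ Zn ∩ U i, min 1 eE ≤ G y := by
            intro y hy
            have hz1 : κ n z ∈ κ n '' (Metric.ball y δ ∩ Zn) :=
              Set.mem_image_of_mem _
                ⟨Metric.mem_ball'.mpr (hdistyz y hy.2 z hzU.1), hzU.2⟩
            have hz2 : κ n z' ∈ κ n '' (Metric.ball y δ ∩ Zn) :=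
              Set.mem_image_of_mem _
                ⟨Metric.mem_ball'.mpr (hdistyz y hy.2 z' hzU'.1), hzU'.2⟩
            have hedist : eE ≤ edist (κ n z) (κ n z') := by
              rw [edist_dist]
              apply ENNReal.ofReal_le_ofReal
              have d1 : dist (κ n z) w < q := Metric.mem_ball.mp hzB
              have d2 : dist (κ n z') w' < q' := Metric.mem_ball.mp hzB'
              have tri : dist w w' ≤ dist w (κ n z) + dist (κ n z) (κ n z') + dist (κ n z') w' := by
                calc dist w w' ≤ dist w (κ n z) + dist (κ n z) w' := dist_triangle _ _ _
                  _ ≤ dist w (κ n z) + (dist (κ n z) (κ n z') + dist (κ n z') w') := by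
                      gcongr
                      exact dist_triangle _ _ _
                  _ = dist w (κ n z) + dist (κ n z) (κ n z') + dist (κ n z') w' := by ring
              rw [dist_comm] at d1
              rw [he']
              linarith
            exact le_min (min_le_left _ _)
              ((min_le_right _ _).trans
                (hedist.trans (EMetric.edist_le_diam_of_mem hz1 hz2)))
          have hβm : β ≤ min 1 eE := min_le_left _ _
          calc β * (cJ i / 2) ≤ min 1 eE * (cJ i / 2) := by gcongr
            _ ≤ min 1 eE * ν n (U i) := by gcongr
            _ = min 1 eE * ((ν n) (U i ∩ Zn) + (ν n) (U i \ Zn)) := by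
                rw [measure_inter_add_diff _ (hZ n δ)]
            _ = min 1 eE * (ν n) (U i ∩ Zn) + min 1 eE * (ν n) (U i \ Zn) := mul_add _ _ _
            _ ≤ (∫⁻ y in Zn ∩ U i, G y ∂ν n) + (ν n) (Znᶜ ∩ U i) := by
                refine add_le_add ?_ ?_
                · rw [Set.inter_comm (U i) Zn]
                  calc min 1 eE * (ν n) (Zn ∩ U i)
                      = ∫⁻ _ in Zn ∩ U i, min 1 eE ∂ν n := (setLIntegral_const _ _).symm
                    _ ≤ ∫⁻ y in Zn ∩ U i, G y ∂ν n :=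
                        setLIntegral_mono' ((hZ n δ).inter (hUmeas i)) hpoint
                · have hmle : min 1 eE ≤ 1 := min_le_left _ _
                  calc min 1 eE * (ν n) (U i \ Zn) ≤ 1 * (ν n) (U i \ Zn) := by gcongr
                    _ = (ν n) (Znᶜ ∩ U i) := by rw [one_mul, Set.diff_eq, Set.inter_comm]
            _ = (ν n) (Znᶜ ∩ U i) + ∫⁻ y in Zn ∩ U i, G y ∂ν n := add_comm _ _
        · rw [not_and_or] at hgood
          have hβτ : β ≤ τ := min_le_right _ _
          have hkey : τ * cJ i / 2 ≤ (ν n) (Znᶜ ∩ U i) := by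
            rcases hgood with hbad | hbad
            · push_neg at hbad
              have hsub : U i ∩ (κ n) ⁻¹' (Metric.ball w q) ⊆ Znᶜ ∩ U i := by
                intro y hy
                exact ⟨fun hyZ => (hbad y ⟨hy.1, hyZ⟩) hy.2, hy.1⟩
              have hmeq : μn n ((U i) ×ˢ Metric.ball w q) =
                  (ν n) (U i ∩ (κ n) ⁻¹' (Metric.ball w q)) := by
                rw [hμn, Measure.map_apply
                  (show Measurable fun x : E => (x, κ n x) from measurable_id.prodMk (hκ n))
                  ((hUmeas i).prod Metric.isOpen_ball.measurableSet)]
                rfl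
              calc τ * cJ i / 2 ≤ μn n ((U i) ×ˢ Metric.ball w q) := h1
                _ = (ν n) (U i ∩ (κ n) ⁻¹' (Metric.ball w q)) := hmeq
                _ ≤ (ν n) (Znᶜ ∩ U i) := measure_mono hsub
            · push_neg at hbad
              have hsub : U i ∩ (κ n) ⁻¹' (Metric.ball w' q') ⊆ Znᶜ ∩ U i := by
                intro y hy
                exact ⟨fun hyZ => (hbad y ⟨hy.1, hyZ⟩) hy.2, hy.1⟩
              have hmeq : μn n ((U i) ×ˢ Metric.ball w' q') =
                  (ν n) (U i ∩ (κ n) ⁻¹' (Metric.ball w' q')) := by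
                rw [hμn, Measure.map_apply
                  (show Measurable fun x : E => (x, κ n x) from measurable_id.prodMk (hκ n))
                  ((hUmeas i).prod Metric.isOpen_ball.measurableSet)]
                rfl
              calc τ * cJ i / 2 ≤ μn n ((U i) ×ˢ Metric.ball w' q') := h2
                _ = (ν n) (U i ∩ (κ n) ⁻¹' (Metric.ball w' q')) := hmeq
                _ ≤ (ν n) (Znᶜ ∩ U i) := measure_mono hsub
          calc β * (cJ i / 2) ≤ τ * (cJ i / 2) := by gcongr
            _ = τ * cJ i / 2 := by rw [mul_div_assoc]
            _ ≤ (ν n) (Znᶜ ∩ U i) := hkey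
            _ ≤ (ν n) (Znᶜ ∩ U i) + ∫⁻ y in Zn ∩ U i, G y ∂ν n := le_self_add
      have hsum1 : ∑ i ∈ J, (ν n) (Znᶜ ∩ U i) ≤ (ν n) Znᶜ := by
        rw [← measure_biUnion_finset ?_ (fun i _ => (hZ n δ).compl.inter (hUmeas i))]
        · exact measure_mono (Set.iUnion₂_subset fun i _ => Set.inter_subset_left)
        · intro i _ j _ hij
          exact (hPdisj hij).mono (Set.inter_subset_right.trans (hUP i))
            (Set.inter_subset_right.trans (hUP j))
      have hsum2 : ∑ i ∈ J, (∫⁻ y in Zn ∩ U i, G y ∂ν n) ≤ ∫⁻ y in Zn, G y ∂ν n := by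
        rw [← lintegral_biUnion_finset ?_ (fun i _ => (hZ n δ).inter (hUmeas i))]
        · exact lintegral_mono_set (Set.iUnion₂_subset fun i _ => Set.inter_subset_left)
        · intro i _ j hj hij
          exact (hPdisj hij).mono (Set.inter_subset_right.trans (hUP i))
            (Set.inter_subset_right.trans (hUP j))
      calc ε₀ = β * ((c/2) / 2) := by rw [hε₀, mul_div_assoc]
        _ ≤ β * ((∑ i ∈ J, cJ i) / 2) := by gcongr
        _ = ∑ i ∈ J, β * (cJ i / 2) := by
            simp only [div_eq_mul_inv, Finset.sum_mul, Finset.mul_sum]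
        _ ≤ ∑ i ∈ J, ((ν n) (Znᶜ ∩ U i) + ∫⁻ y in Zn ∩ U i, G y ∂(ν n)) :=
            Finset.sum_le_sum hone
        _ = (∑ i ∈ J, (ν n) (Znᶜ ∩ U i)) + ∑ i ∈ J, (∫⁻ y in Zn ∩ U i, G y ∂ν n) :=
            Finset.sum_add_distrib
        _ ≤ (ν n) Znᶜ + ∫⁻ y in Zn, G y ∂ν n := add_le_add hsum1 hsum2
    exact le_liminf_of_le (by isBoundedDefault) hmain
  -- contradiction with hlim
  obtain ⟨δ, hδlt, hδpos⟩ := ((hlim.eventually (eventually_lt_nhds hε₀pos)).and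
    eventually_mem_nhdsWithin).exists
  exact absurd (key δ (Set.mem_Ioi.mp hδpos)) (not_le.mpr hδlt)

/-- Diameter criterion for a weak limit of functionally marked measures to admit a mark
function. -/
theorem markFunction_of_diam_criterion {E I : Type*}
    [MetricSpace E] [CompleteSpace E] [SecondCountableTopology E]
    [MeasurableSpace E] [BorelSpace E]
    [MetricSpace I] [CompleteSpace I] [SecondCountableTopology I]
    [MeasurableSpace I] [BorelSpace I]
    (ν : ℕ → Measure E) [∀ n, IsFiniteMeasure (ν n)]
    (κ : ℕ → E → I) (hκ : ∀ n, Measurable (κ n))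
    (μ : Measure (E × I)) [IsFiniteMeasure μ]
    (hconv : WeakConv (fun n => (ν n).map (fun x => (x, κ n x))) μ)
    (Z : ℕ → ℝ → Set E) (hZ : ∀ n δ, MeasurableSet (Z n δ))
    (hdiammeas : ∀ n, ∀ δ : ℝ, Measurable (fun x : E =>
      min 1 (EMetric.diam (κ n '' (Metric.ball x δ ∩ Z n δ)))))
    (hlim : Tendsto (fun δ : ℝ => Filter.liminf (fun n =>
        (ν n) (Z n δ)ᶜ +
          ∫⁻ x in Z n δ, min 1 (EMetric.diam (κ n '' (Metric.ball x δ ∩ Z n δ))) ∂(ν n))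
        atTop)
      (𝓝[>] (0 : ℝ)) (𝓝 0)) :
    ∃ κ₀ : E → I, IsMarkFunction μ κ₀ := by
  rcases isEmpty_or_nonempty E with hE | hE
  · haveI : IsEmpty (E × I) := ⟨fun p => hE.false p.1⟩
    exact ⟨κ 0, hκ 0, Subsingleton.elim _ _⟩
  rcases isEmpty_or_nonempty I with hI | hI
  · haveI : IsEmpty (E × I) := ⟨fun p => hI.false p.2⟩
    exact ⟨κ 0, hκ 0, Subsingleton.elim _ _⟩
  haveI : ∀ n, IsFiniteMeasure ((ν n).map (fun x => (x, κ n x))) :=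
    fun n => Measure.isFiniteMeasure_map _ _
  -- weak convergence of the first marginals
  have hconvE : WeakConv ν μ.fst := by
    intro f
    have h2 := hconv (f.compContinuous ⟨Prod.fst, continuous_fst⟩)
    have e1 : ∀ n, ∫ p, (f.compContinuous ⟨Prod.fst, continuous_fst⟩) p
        ∂((ν n).map (fun x => (x, κ n x))) = ∫ x, f x ∂(ν n) := by
      intro n
      rw [integral_map (show Measurable fun x : E => (x, κ n x) from
          measurable_id.prodMk (hκ n)).aemeasurable
        ((f.compContinuous ⟨Prod.fst, continuous_fst⟩).continuous.aestronglyMeasurable)]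
      rfl
    have e2 : ∫ p, (f.compContinuous ⟨Prod.fst, continuous_fst⟩) p ∂μ
        = ∫ x, f x ∂μ.fst := by
      rw [Measure.fst, integral_map measurable_fst.aemeasurable
        f.continuous.aestronglyMeasurable]
      rfl
    rw [← e2]
    exact h2.congr e1
  have hopenP : ∀ U : Set (E × I), IsOpen U →
      μ U ≤ atTop.liminf fun n => ((ν n).map fun x => (x, κ n x)) U :=
    fun U hU => weakConv_le_liminf_open hconv hU
  have hopenE : ∀ U : Set E, IsOpen U → μ.fst U ≤ atTop.liminf fun n => ν n U :=
    fun U hU => weakConv_le_liminf_open hconvE hU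
  set v : ℕ → I := TopologicalSpace.denseSeq I with hv
  have hvd : DenseRange v := TopologicalSpace.denseRange_denseSeq I
  have hnull : ∀ (i j : ℕ) (a b : ℚ) (m : ℕ), 0 < a → 0 < b →
      (a : ℝ) + (b : ℝ) < dist (v i) (v j) →
      μ.fst {x | ((m : ℝ≥0∞) + 1)⁻¹ ≤ μ.condKernel x (Metric.ball (v i) (a : ℝ)) ∧
        ((m : ℝ≥0∞) + 1)⁻¹ ≤ μ.condKernel x (Metric.ball (v j) (b : ℝ))} = 0 := by
    intro i j a b m ha hb hab
    refine core_null ν κ hκ μ hopenP hopenE Z hZ hdiammeas hlim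
      (by exact_mod_cast ha) (by exact_mod_cast hb) hab ?_ ?_
    · exact ENNReal.inv_pos.mpr (by simp)
    · exact ENNReal.inv_le_one.mpr (by simp)
  have hae0 : ∀ᵐ x ∂μ.fst, ∀ (i j : ℕ) (a b : ℚ) (m : ℕ),
      0 < a → 0 < b → (a : ℝ) + (b : ℝ) < dist (v i) (v j) →
      ¬(((m : ℝ≥0∞) + 1)⁻¹ ≤ μ.condKernel x (Metric.ball (v i) (a : ℝ)) ∧
        ((m : ℝ≥0∞) + 1)⁻¹ ≤ μ.condKernel x (Metric.ball (v j) (b : ℝ))) := by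
    refine ae_all_iff.mpr fun i => ae_all_iff.mpr fun j => ae_all_iff.mpr fun a =>
      ae_all_iff.mpr fun b => ae_all_iff.mpr fun m => ?_
    by_cases hcond : 0 < a ∧ 0 < b ∧ (a : ℝ) + (b : ℝ) < dist (v i) (v j)
    · obtain ⟨ha, hb, hab⟩ := hcond
      have h1 := measure_eq_zero_iff_ae_notMem.mp (hnull i j a b m ha hb hab)
      filter_upwards [h1] with x hx _ _ _
      exact hx
    · exact Eventually.of_forall fun x ha hb hab => absurd ⟨ha, hb, hab⟩ hcond
  have hae : ∀ᵐ x ∂μ.fst, ∃ p, μ.condKernel x = Measure.dirac p := by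
    filter_upwards [hae0] with x hx
    refine eq_dirac_of_pairs (μ.condKernel x) v hvd ?_
    intro i j a b ha hb hab
    by_contra hcon
    push_neg at hcon
    obtain ⟨h1, h2⟩ := hcon
    have h1' : 0 < μ.condKernel x (Metric.ball (v i) (a : ℝ)) := pos_iff_ne_zero.mpr h1
    have h2' : 0 < μ.condKernel x (Metric.ball (v j) (b : ℝ)) := pos_iff_ne_zero.mpr h2
    obtain ⟨m, hm⟩ := ENNReal.exists_inv_nat_lt (lt_min h1' h2').ne'
    have hmono : ((m : ℝ≥0∞) + 1)⁻¹ ≤ (m : ℝ≥0∞)⁻¹ :=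
      ENNReal.inv_le_inv' le_self_add
    refine hx i j a b m ha hb hab ⟨?_, ?_⟩
    · exact (hmono.trans hm.le).trans (min_le_left _ _)
    · exact (hmono.trans hm.le).trans (min_le_right _ _)
  obtain ⟨κ₀, hκ₀m, hκ₀⟩ := exists_measurable_dirac_selection μ.condKernel μ.fst hae
  refine ⟨κ₀, hκ₀m, ?_⟩
  conv_lhs => rw [← μ.disintegrate μ.condKernel]
  exact compProd_dirac_eq_map μ.fst μ.condKernel κ₀ hκ₀m hκ₀
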